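/- Fix a prime p and a finite simple graph G. There exists a constant C (depending on p and G) such that for every prime ℓ with ℓ > C, p ∣ ℓ − 1, and -1 ∈ (F_ℓ^×)^p, the graph G is isomorphic to an induced subgraph of the p-unitary Cayley graph G_{F_ℓ}(p); that is, there is a graph embedding of G into G_{F_ℓ}(p). -/

import Mathlib

open Finset

set_option linter.unusedSectionVars false
set_option maxHeartbeats 1600000

/-- The `p`-unitary Cayley graph of a commutative ring `R`: vertices are elements of `R`,
and distinct `a, b` are adjacent iff `a - b` is a `p`-th power of a unit.
(When `-1 ∈ (Rˣ)^p`, the relation is symmetric, so `fromRel` gives exactly this graph.) -/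
def pUnitaryCayley (R : Type*) [CommRing R] (p : ℕ) : SimpleGraph R :=
  SimpleGraph.fromRel (fun a b => ∃ u : Rˣ, a - b = (u : R) ^ p)


lemma exists_dlog (p ℓ : ℕ) (hp : p.Prime) (hl : ℓ.Prime) (hd : p ∣ ℓ - 1) :
    ∃ e : ZMod ℓ → ZMod p,
      (∀ a b : ZMod ℓ, a ≠ 0 → b ≠ 0 → e (a * b) = e a + e b) ∧
      (∀ a : ZMod ℓ, a ≠ 0 → (e a = 0 ↔ ∃ u : (ZMod ℓ)ˣ, a = (u : ZMod ℓ) ^ p)) ∧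
      (∃ z₁ : ZMod ℓ, z₁ ≠ 0 ∧ e z₁ = 1) := by
  haveI : Fact ℓ.Prime := ⟨hl⟩
  haveI : Fact p.Prime := ⟨hp⟩
  obtain ⟨g, hg⟩ := IsCyclic.exists_generator (α := (ZMod ℓ)ˣ)
  have horder : orderOf g = ℓ - 1 := by
    rw [orderOf_eq_card_of_forall_mem_zpowers hg, Nat.card_eq_fintype_card, ZMod.card_units]
  have hex : ∀ z : (ZMod ℓ)ˣ, ∃ k : ℕ, g ^ k = z := by
    intro z
    have := hg z
    rw [← mem_powers_iff_mem_zpowers] at this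
    obtain ⟨k, hk⟩ := this
    exact ⟨k, hk⟩
  have key : ∀ a b : ℕ, g ^ a = g ^ b → ((a : ZMod p) = (b : ZMod p)) := by
    intro a b hab
    rw [pow_eq_pow_iff_modEq, horder] at hab
    exact (ZMod.natCast_eq_natCast_iff _ _ _).2 (hab.of_dvd hd)
  set E : (ZMod ℓ)ˣ → ZMod p := fun z => ((Classical.choose (hex z) : ℕ) : ZMod p) with hE
  have hEpow : ∀ k : ℕ, E (g ^ k) = (k : ZMod p) := by
    intro k
    exact key _ _ (Classical.choose_spec (hex (g ^ k)))
  have hspec : ∀ z, g ^ (Classical.choose (hex z)) = z := fun z => Classical.choose_spec (hex z)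
  have hEmul : ∀ z w : (ZMod ℓ)ˣ, E (z * w) = E z + E w := by
    intro z w
    have h1 : g ^ (Classical.choose (hex z) + Classical.choose (hex w)) = z * w := by
      rw [pow_add, hspec, hspec]
    have := key _ _ ((hspec (z * w)).trans h1.symm)
    show ((Classical.choose (hex (z * w)) : ℕ) : ZMod p) = ((Classical.choose (hex z) : ℕ) : ZMod p) + ((Classical.choose (hex w) : ℕ) : ZMod p)
    rw [this]
    push_cast
    ring
  have hE1 : E 1 = 0 := by simpa using hEpow 0
  have hEzero : ∀ z : (ZMod ℓ)ˣ, (E z = 0 ↔ ∃ u : (ZMod ℓ)ˣ, z = u ^ p) := by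
    intro z
    constructor
    · intro h0
      have : ((Classical.choose (hex z) : ℕ) : ZMod p) = 0 := h0
      rw [ZMod.natCast_eq_zero_iff] at this
      obtain ⟨k, hk⟩ := this
      refine ⟨g ^ k, ?_⟩
      rw [← pow_mul, mul_comm k p, ← hk, hspec]
    · rintro ⟨u, rfl⟩
      obtain ⟨k, hk⟩ := hex u
      rw [← hk, ← pow_mul, hEpow]
      push_cast
      simp
  refine ⟨fun z => if h : z = 0 then 0 else E (Units.mk0 z h), ?_, ?_, ?_⟩
  · intro a b ha hb
    have hab : a * b ≠ 0 := mul_ne_zero ha hb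
    simp only [dif_neg hab, dif_neg ha, dif_neg hb]
    rw [← hEmul]
    congr 1
    ext
    simp
  · intro a ha
    simp only [dif_neg ha]
    rw [hEzero]
    constructor
    · rintro ⟨u, hu⟩
      refine ⟨u, ?_⟩
      have := congrArg (fun w : (ZMod ℓ)ˣ => (w : ZMod ℓ)) hu
      simpa using this
    · rintro ⟨u, hu⟩
      refine ⟨u, Units.ext ?_⟩
      simpa using hu
  · refine ⟨(g : ZMod ℓ), g.ne_zero, ?_⟩
    simp only [dif_neg g.ne_zero]
    have : Units.mk0 (g : ZMod ℓ) g.ne_zero = g := Units.ext (by simp)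
    rw [this]
    simpa using hEpow 1


open Finset

structure DlogData (p ℓ : ℕ) (e : ZMod ℓ → ZMod p) (ψ : AddChar (ZMod p) ℂ) : Prop where
  hmul : ∀ a b : ZMod ℓ, a ≠ 0 → b ≠ 0 → e (a * b) = e a + e b
  hzero : ∀ a : ZMod ℓ, a ≠ 0 → (e a = 0 ↔ ∃ u : (ZMod ℓ)ˣ, a = (u : ZMod ℓ) ^ p)
  hone : ∃ z₁ : ZMod ℓ, z₁ ≠ 0 ∧ e z₁ = 1
  hneg : e (-1) = 0
  hprim : ψ.IsPrimitive
  hnorm : ∀ a, ‖ψ a‖ = 1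

set_option linter.unusedSectionVars false

namespace DlogData

variable {p ℓ : ℕ} [Fact p.Prime] [Fact ℓ.Prime] {e : ZMod ℓ → ZMod p} {ψ : AddChar (ZMod p) ℂ}

/-- The twisted multiplicative character. -/
noncomputable def xi (e : ZMod ℓ → ZMod p) (ψ : AddChar (ZMod p) ℂ) (c : ZMod p) (z : ZMod ℓ) : ℂ :=
  if z = 0 then 0 else ψ (c * e z)

lemma xi_zero (c : ZMod p) : xi e ψ c (0 : ZMod ℓ) = 0 := if_pos rfl

lemma xi_of_ne (c : ZMod p) {z : ZMod ℓ} (hz : z ≠ 0) : xi e ψ c z = ψ (c * e z) := if_neg hz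

lemma e_one (h : DlogData p ℓ e ψ) : e 1 = 0 :=
  (h.hzero 1 one_ne_zero).2 ⟨1, by simp⟩

lemma e_neg (h : DlogData p ℓ e ψ) {z : ZMod ℓ} (hz : z ≠ 0) : e (-z) = e z := by
  have : (-1 : ZMod ℓ) ≠ 0 := by
    simp only [ne_eq, neg_eq_zero]
    exact one_ne_zero
  have := h.hmul (-1) z this hz
  rw [neg_one_mul] at this
  rw [this, h.hneg, zero_add]

lemma xi_neg (h : DlogData p ℓ e ψ) (c : ZMod p) (z : ZMod ℓ) : xi e ψ c (-z) = xi e ψ c z := by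
  rcases eq_or_ne z 0 with rfl | hz
  · simp
  · rw [xi_of_ne c hz, xi_of_ne c (neg_ne_zero.2 hz), h.e_neg hz]

lemma xi_mul (c c' : ZMod p) (z : ZMod ℓ) :
    xi e ψ c z * xi e ψ c' z = xi e ψ (c + c') z := by
  rcases eq_or_ne z 0 with rfl | hz
  · simp [xi_zero]
  · rw [xi_of_ne c hz, xi_of_ne c' hz, xi_of_ne _ hz, ← AddChar.map_add_eq_mul, add_mul]

lemma xi_zero_char (z : ZMod ℓ) : xi e ψ 0 z = if z = 0 then 0 else 1 := by
  rcases eq_or_ne z 0 with rfl | hz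
  · simp [xi_zero]
  · rw [xi_of_ne _ hz, if_neg hz, zero_mul, AddChar.map_zero_eq_one]

lemma norm_xi_le (c : ZMod p) (z : ZMod ℓ) (h : DlogData p ℓ e ψ) : ‖xi e ψ c z‖ ≤ 1 := by
  rcases eq_or_ne z 0 with rfl | hz
  · simp [xi_zero]
  · rw [xi_of_ne _ hz, h.hnorm]

lemma conj_psi (h : DlogData p ℓ e ψ) (a : ZMod p) : (starRingEnd ℂ) (ψ a) = ψ (-a) := by
  have h1 : ψ a * ψ (-a) = 1 := by
    rw [← AddChar.map_add_eq_mul, add_neg_cancel, AddChar.map_zero_eq_one]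
  have h2 : ψ a * (starRingEnd ℂ) (ψ a) = 1 := by
    rw [Complex.mul_conj]
    norm_cast
    rw [← Complex.sq_norm]
    have := h.hnorm a
    rw [this]; norm_num
  have hne : ψ a ≠ 0 := by
    intro h0
    rw [h0, zero_mul] at h1
    exact zero_ne_one h1
  exact mul_left_cancel₀ hne (h2.trans h1.symm)

lemma conj_xi (h : DlogData p ℓ e ψ) (c : ZMod p) (z : ZMod ℓ) :
    (starRingEnd ℂ) (xi e ψ c z) = xi e ψ (-c) z := by
  rcases eq_or_ne z 0 with rfl | hz
  · simp [xi_zero]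
  · rw [xi_of_ne _ hz, xi_of_ne _ hz, h.conj_psi, neg_mul]

lemma psi_ne_one (h : DlogData p ℓ e ψ) {c : ZMod p} (hc : c ≠ 0) : ψ c ≠ 1 := by
  intro h1
  exact hc ((AddChar.IsPrimitive.zmod_char_eq_one_iff p h.hprim c).1 h1)

/-- Orthogonality: sum of a nontrivial `xi` over `ZMod ℓ` vanishes. -/
lemma sum_xi (h : DlogData p ℓ e ψ) {c : ZMod p} (hc : c ≠ 0) :
    ∑ z : ZMod ℓ, xi e ψ c z = 0 := by
  obtain ⟨z₁, hz₁, he₁⟩ := h.hone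
  have key : ∀ z : ZMod ℓ, xi e ψ c (z₁ * z) = ψ c * xi e ψ c z := by
    intro z
    rcases eq_or_ne z 0 with rfl | hz
    · simp [xi_zero]
    · rw [xi_of_ne _ hz, xi_of_ne _ (mul_ne_zero hz₁ hz), h.hmul z₁ z hz₁ hz, he₁,
        mul_add, AddChar.map_add_eq_mul, mul_one]
  have hsum : ∑ z : ZMod ℓ, xi e ψ c z = ∑ z : ZMod ℓ, xi e ψ c (z₁ * z) :=
    (Fintype.sum_bijective _ (Equiv.mulLeft₀ z₁ hz₁).bijective _ _ fun z => rfl).symm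
  have hsum2 : (∑ z : ZMod ℓ, xi e ψ c z) = ψ c * ∑ z : ZMod ℓ, xi e ψ c z := by
    conv_lhs => rw [hsum]
    rw [Finset.sum_congr rfl fun z _ => key z, ← Finset.mul_sum]
  have hz : (1 - ψ c) * ∑ z : ZMod ℓ, xi e ψ c z = 0 := by
    rw [sub_mul, one_mul, ← hsum2, sub_self]
  rcases mul_eq_zero.1 hz with h1 | h2
  · exact absurd (sub_eq_zero.1 h1).symm (h.psi_ne_one hc)
  · exact h2

/-- Orthogonality in the `ZMod p` variable. -/
lemma sum_psi_mul (h : DlogData p ℓ e ψ) (d : ZMod p) :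
    ∑ j : ZMod p, ψ (j * d) = if d = 0 then (p : ℂ) else 0 := by
  rcases eq_or_ne d 0 with rfl | hd
  · simp [AddChar.map_zero_eq_one, ZMod.card]
  · rw [if_neg hd]
    have : ∀ j : ZMod p, ψ (j * d) = (ψ.mulShift d) j := by
      intro j; rw [AddChar.mulShift_apply, mul_comm]
    rw [Finset.sum_congr rfl fun j _ => this j]
    have hne : ψ.mulShift d ≠ 1 := h.hprim hd
    exact AddChar.sum_eq_zero_iff_ne_zero.2 hne

end DlogData

namespace DlogData
variable {p ℓ : ℕ} [Fact p.Prime] [Fact ℓ.Prime] {e : ZMod ℓ → ZMod p} {ψ : AddChar (ZMod p) ℂ}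

lemma e_inv (h : DlogData p ℓ e ψ) {z : ZMod ℓ} (hz : z ≠ 0) : e z⁻¹ = - e z := by
  have hinv : z⁻¹ ≠ 0 := inv_ne_zero hz
  have := h.hmul z z⁻¹ hz hinv
  rw [mul_inv_cancel₀ hz, h.e_one] at this
  linear_combination -this

lemma e_div (h : DlogData p ℓ e ψ) {a b : ZMod ℓ} (ha : a ≠ 0) (hb : b ≠ 0) :
    e (a / b) = e a - e b := by
  rw [div_eq_mul_inv, h.hmul a b⁻¹ ha (inv_ne_zero hb), h.e_inv hb, sub_eq_add_neg]

lemma xi_one (h : DlogData p ℓ e ψ) (c : ZMod p) : xi e ψ c (1 : ZMod ℓ) = 1 := by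
  rw [xi_of_ne c one_ne_zero, h.e_one, mul_zero, AddChar.map_zero_eq_one]

/-- The correlation sum. -/
noncomputable def H (e : ZMod ℓ → ZMod p) (ψ : AddChar (ZMod p) ℂ) (c : ZMod p) (y y' : ZMod ℓ) : ℂ :=
  ∑ w : ZMod ℓ, xi e ψ c (y - w) * xi e ψ (-c) (y' - w)

lemma H_diag (c : ZMod p) (y : ZMod ℓ) : H e ψ c y y = (ℓ : ℂ) - 1 := by
  have : ∀ w : ZMod ℓ, xi e ψ c (y - w) * xi e ψ (-c) (y - w) = if w = y then 0 else 1 := by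
    intro w
    rw [xi_mul, add_neg_cancel, xi_zero_char]
    congr 1
    simp [sub_eq_zero, eq_comm]
  rw [H, Finset.sum_congr rfl fun w _ => this w]
  have : ∀ w : ZMod ℓ, (if w = y then (0:ℂ) else 1) = 1 - (if w = y then 1 else 0) := by
    intro w; split_ifs <;> ring
  rw [Finset.sum_congr rfl fun w _ => this w, Finset.sum_sub_distrib]
  simp [ZMod.card]

lemma norm_H_le (h : DlogData p ℓ e ψ) (c : ZMod p) (y y' : ZMod ℓ) : ‖H e ψ c y y'‖ ≤ ℓ := by
  refine (norm_sum_le _ _).trans ?_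
  have : ∀ w : ZMod ℓ, ‖xi e ψ c (y - w) * xi e ψ (-c) (y' - w)‖ ≤ 1 := by
    intro w
    rw [norm_mul]
    exact mul_le_one₀ (norm_xi_le _ _ h) (norm_nonneg _) (norm_xi_le _ _ h)
  refine (Finset.sum_le_sum fun w _ => this w).trans ?_
  simp [ZMod.card]

lemma H_off (h : DlogData p ℓ e ψ) {c : ZMod p} (hc : c ≠ 0) {y y' : ZMod ℓ} (hyy : y ≠ y') :
    H e ψ c y y' = -1 := by
  classical
  set σ : ZMod ℓ → ZMod ℓ := fun w => if w = y' then 1 else (y - w) / (y' - w) with hσ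
  set τ : ZMod ℓ → ZMod ℓ := fun v => if v = 1 then y' else (v * y' - y) / (v - 1) with hτ
  have hbij : Function.Bijective σ := by
    have hli : Function.LeftInverse τ σ := by
      intro w
      rcases eq_or_ne w y' with rfl | hw
      · simp [hσ, hτ]
      · have hd : y' - w ≠ 0 := sub_ne_zero.2 (Ne.symm hw)
        have hv1 : (y - w) / (y' - w) ≠ 1 := by
          intro h1
          rw [div_eq_one_iff_eq hd] at h1
          exact hyy (by linear_combination h1)
        simp only [hσ, hτ, if_neg hw, if_neg hv1]
        rw [div_sub_one hd]
        have hnum : y - y' ≠ 0 := sub_ne_zero.2 hyy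
        field_simp
        linear_combination w * mul_inv_cancel₀ hnum
    have hri : Function.RightInverse τ σ := by
      intro v
      rcases eq_or_ne v 1 with rfl | hv
      · simp [hσ, hτ]
      · have hv0 : v - 1 ≠ 0 := sub_ne_zero.2 hv
        have hu : (v * y' - y) / (v - 1) ≠ y' := by
          intro h1
          rw [div_eq_iff hv0] at h1
          apply hyy
          linear_combination -h1
        simp only [hσ, hτ, if_neg hv, if_neg hu]
        have hden : y' - (v * y' - y) / (v - 1) ≠ 0 := sub_ne_zero.2 (Ne.symm hu)
        rw [div_eq_iff hden]
        field_simp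
        ring
    exact Function.bijective_iff_has_inverse.2 ⟨τ, hli, hri⟩
  have hsummand : ∀ w : ZMod ℓ,
      xi e ψ c (y - w) * xi e ψ (-c) (y' - w)
        = (fun v => if v = 1 then 0 else xi e ψ c v) (σ w) := by
    intro w
    rcases eq_or_ne w y' with rfl | hw
    · simp [hσ, xi_zero]
    · have hd : y' - w ≠ 0 := sub_ne_zero.2 (Ne.symm hw)
      have hv1 : (y - w) / (y' - w) ≠ 1 := by
        intro h1
        rw [div_eq_one_iff_eq hd] at h1
        exact hyy (by linear_combination h1)
      simp only [hσ, if_neg hw, if_neg hv1]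
      rcases eq_or_ne w y with rfl | hwy
      · simp [xi_zero]
      · have hn : y - w ≠ 0 := sub_ne_zero.2 (Ne.symm hwy)
        have hq : (y - w) / (y' - w) ≠ 0 := div_ne_zero hn hd
        rw [xi_of_ne _ hn, xi_of_ne _ hd, xi_of_ne _ hq, h.e_div hn hd,
          ← AddChar.map_add_eq_mul]
        congr 1
        ring
  have : H e ψ c y y' = ∑ v : ZMod ℓ, (if v = 1 then 0 else xi e ψ c v) := by
    rw [H, Finset.sum_congr rfl fun w _ => hsummand w]
    exact Fintype.sum_bijective σ hbij _ _ fun w => rfl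
  rw [this]
  have : ∀ v : ZMod ℓ, (if v = 1 then (0:ℂ) else xi e ψ c v)
      = xi e ψ c v - (if v = 1 then xi e ψ c 1 else 0) := by
    intro v
    split_ifs with h1
    · rw [h1]; ring
    · ring
  rw [Finset.sum_congr rfl fun v _ => this v, Finset.sum_sub_distrib, h.sum_xi hc]
  simp [h.xi_one]

end DlogData



section ABound
variable {p ℓ : ℕ} [Fact p.Prime] [Fact ℓ.Prime]

theorem norm_A_sq_le (xi : ZMod p → ZMod ℓ → ℂ)
    (hxi_neg : ∀ c z, xi c (-z) = xi c z)
    (hxi_norm : ∀ c z, ‖xi c z‖ ≤ 1)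
    (hconj_xi : ∀ c z, (starRingEnd ℂ) (xi c z) = xi (-c) z)
    (H : ZMod p → ZMod ℓ → ZMod ℓ → ℂ)
    (hH : ∀ c y y', H c y y' = ∑ t : ZMod ℓ, xi c (y - t) * xi (-c) (y' - t))
    (hH_norm : ∀ c y y', ‖H c y y'‖ ≤ ℓ)
    (hH_off : ∀ c y y', c ≠ 0 → y ≠ y' → H c y y' = -1)
    {n : ℕ} (J : Fin n × Fin n → ZMod p)
    {v w : Fin n} (hvw : v < w) (hJ : J (v, w) ≠ 0) :
    ‖∑ x : Fin n → ZMod ℓ, ∏ q ∈ univ.filter (fun q : Fin n × Fin n => q.1 < q.2),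
        xi (J q) (x q.1 - x q.2)‖ ^ 2 ≤ 2 * (ℓ : ℝ) ^ (2 * n - 1) := by
  classical
  have hn2 : 2 ≤ n := by
    have h1 : (v : ℕ) < (w : ℕ) := hvw
    have h2 : (w : ℕ) < n := w.isLt
    omega
  have hl0 : (0:ℝ) ≤ (ℓ:ℝ) := Nat.cast_nonneg ℓ
  set ws : {j : Fin n // j ≠ v} := ⟨w, hvw.ne'⟩ with hws
  set cJ : {j : Fin n // j ≠ v} → ZMod p :=
    fun j => if v < (j : Fin n) then J (v, (j : Fin n)) else J ((j : Fin n), v) with hcJ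
  have hcJw : cJ ws = J (v, w) := by simp [hcJ, hws, hvw]
  set emb : (({j : Fin n // j ≠ v} → ZMod ℓ) × ZMod ℓ) → (Fin n → ZMod ℓ) :=
    fun uz i => if h : i = v then uz.2 else uz.1 ⟨i, h⟩ with hemb
  have hembv : ∀ uz, emb uz v = uz.2 := fun uz => dif_pos rfl
  have hembj : ∀ uz (j : Fin n) (hj : j ≠ v), emb uz j = uz.1 ⟨j, hj⟩ := fun uz j hj => dif_neg hj
  have hbij : Function.Bijective emb := by
    constructor
    · intro a b hab
      have h2 : a.2 = b.2 := by rw [← hembv a, ← hembv b, hab]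
      have h1 : a.1 = b.1 := by
        funext j
        rw [← hembj a j j.2, ← hembj b j j.2, hab]
      exact Prod.ext h1 h2
    · intro x
      refine ⟨(fun j => x j, x v), ?_⟩
      funext i
      by_cases h : i = v
      · rw [h, hembv]
      · rw [hembj _ i h]
  set g : ({j : Fin n // j ≠ v} → ZMod ℓ) → ℂ :=
    fun u => ∑ z : ZMod ℓ, ∏ j : {j : Fin n // j ≠ v}, xi (cJ j) (z - u j) with hg
  set B : ({j : Fin n // j ≠ v} → ZMod ℓ) → ℂ :=
    fun u => ∏ q ∈ univ.filter (fun q : Fin n × Fin n => q.1 < q.2 ∧ ¬(q.1 = v ∨ q.2 = v)),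
      xi (J q) ((if h : q.1 = v then 0 else u ⟨q.1, h⟩) - (if h : q.2 = v then 0 else u ⟨q.2, h⟩))
    with hB
  -- Step 1: A = ∑ u, B u * g u
  have hA : (∑ x : Fin n → ZMod ℓ, ∏ q ∈ univ.filter (fun q : Fin n × Fin n => q.1 < q.2),
        xi (J q) (x q.1 - x q.2)) = ∑ u, B u * g u := by
    rw [← Fintype.sum_bijective emb hbij
      (fun uz => ∏ q ∈ univ.filter (fun q : Fin n × Fin n => q.1 < q.2),
        xi (J q) (emb uz q.1 - emb uz q.2))
      (fun x => ∏ q ∈ univ.filter (fun q : Fin n × Fin n => q.1 < q.2),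
        xi (J q) (x q.1 - x q.2))
      (fun uz => rfl)]
    rw [Fintype.sum_prod_type]
    refine Finset.sum_congr rfl fun u _ => ?_
    rw [hg, Finset.mul_sum]
    refine Finset.sum_congr rfl fun z _ => ?_
    have hsplit := Finset.prod_filter_mul_prod_filter_not
      (univ.filter (fun q : Fin n × Fin n => q.1 < q.2)) (fun q => q.1 = v ∨ q.2 = v)
      (fun q => xi (J q) (emb (u, z) q.1 - emb (u, z) q.2))
    rw [Finset.filter_filter, Finset.filter_filter] at hsplit
    rw [← hsplit, mul_comm]
    congr 1
    · rw [hB]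
      refine Finset.prod_congr rfl fun q hq => ?_
      simp only [Finset.mem_filter] at hq
      have h1 : q.1 ≠ v := fun h => hq.2.2 (Or.inl h)
      have h2 : q.2 ≠ v := fun h => hq.2.2 (Or.inr h)
      rw [hembj _ _ h1, hembj _ _ h2]
      simp only [dif_neg h1, dif_neg h2]
    · refine Finset.prod_bij'
        (fun q hq => (⟨if q.1 = v then q.2 else q.1, ?hne⟩ : {j : Fin n // j ≠ v}))
        (fun s _ => if v < (s : Fin n) then (v, (s : Fin n)) else ((s : Fin n), v))
        ?hmem1 ?hmem2 ?hleft ?hright ?hfac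
      case hne =>
        simp only [Finset.mem_filter] at hq
        rcases eq_or_ne q.1 v with h1 | h1
        · rw [if_pos h1]
          intro hc
          rw [h1, hc] at hq
          exact absurd hq.2.1 (lt_irrefl v)
        · rw [if_neg h1]
          exact h1
      case hmem1 =>
        intro q hq
        exact Finset.mem_univ _
      case hmem2 =>
        intro s _
        simp only [Finset.mem_filter, Finset.mem_univ, true_and]
        rcases lt_or_gt_of_ne s.2 with h | h
        · rw [if_neg (not_lt.2 (le_of_lt h))]
          exact ⟨h, Or.inr rfl⟩
        · rw [if_pos h]
          exact ⟨h, Or.inl rfl⟩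
      case hleft =>
        rintro ⟨a, b⟩ hq
        simp only [Finset.mem_filter, Finset.mem_univ, true_and] at hq
        rcases eq_or_ne a v with heq | h1
        · have hlt : v < b := heq ▸ hq.1
          simp [heq, hlt]
        · have h2 : b = v := (hq.2).resolve_left h1
          have hlt : ¬ v < a := not_lt.2 (le_of_lt (h2 ▸ hq.1))
          simp [h1, h2, hlt]
      case hright =>
        rintro ⟨s, hs⟩ _
        rcases lt_or_gt_of_ne hs with h | h
        · have h' : ¬ v < s := not_lt.2 (le_of_lt h)
          simp [h', hs]
        · simp [h, hs]
      case hfac =>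
        rintro ⟨a, b⟩ hq
        simp only [Finset.mem_filter, Finset.mem_univ, true_and] at hq
        rcases eq_or_ne a v with heq | h1
        · have hlt : v < b := heq ▸ hq.1
          have hne2 : b ≠ v := hlt.ne'
          simp [hemb, hcJ, heq, hne2, hlt]
        · have h2 : b = v := (hq.2).resolve_left h1
          have hlt : ¬ v < a := not_lt.2 (le_of_lt (h2 ▸ hq.1))
          rw [← hxi_neg (J (a, b))]
          simp [hemb, hcJ, h1, h2, hlt, neg_sub]
  rw [hA]
  have hBle : ∀ u, ‖B u‖ ≤ 1 := by
    intro u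
    rw [hB]
    simp only
    rw [norm_prod]
    exact Finset.prod_le_one (fun q _ => norm_nonneg _) (fun q _ => hxi_norm _ _)
  have h5 : ‖∑ u, B u * g u‖ ≤ ∑ u, ‖g u‖ := by
    refine (norm_sum_le _ _).trans (Finset.sum_le_sum fun u _ => ?_)
    rw [norm_mul]
    calc ‖B u‖ * ‖g u‖ ≤ 1 * ‖g u‖ := mul_le_mul_of_nonneg_right (hBle u) (norm_nonneg _)
      _ = ‖g u‖ := one_mul _
  have hcardS : Fintype.card {j : Fin n // j ≠ v} = n - 1 := by
    have h := Fintype.card_subtype_compl (fun j : Fin n => j = v)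
    simp only [Fintype.card_subtype_eq, Fintype.card_fin] at h
    exact h
  have hcard_fun : (Fintype.card ({j : Fin n // j ≠ v} → ZMod ℓ) : ℝ) = (ℓ:ℝ) ^ (n - 1) := by
    rw [Fintype.card_fun, hcardS, ZMod.card]
    push_cast
    ring
  have h6 : (∑ u, ‖g u‖) ^ 2 ≤ (ℓ:ℝ)^(n-1) * ∑ u, ‖g u‖^2 := by
    have h := sq_sum_le_card_mul_sum_sq (s := (univ : Finset ({j : Fin n // j ≠ v} → ZMod ℓ)))
      (f := fun u => ‖g u‖)
    rw [Finset.card_univ] at h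
    calc (∑ u, ‖g u‖) ^ 2 ≤ (Fintype.card ({j : Fin n // j ≠ v} → ZMod ℓ) : ℝ) * ∑ u, ‖g u‖^2 := h
      _ = (ℓ:ℝ)^(n-1) * ∑ u, ‖g u‖^2 := by rw [hcard_fun]
  have h7 : ∑ u, ‖g u‖^2 ≤ 2 * (ℓ:ℝ)^n := by
    have hconjg : ∀ u, (starRingEnd ℂ) (g u)
        = ∑ z' : ZMod ℓ, ∏ j : {j : Fin n // j ≠ v}, xi (-(cJ j)) (z' - u j) := by
      intro u
      rw [hg]
      simp only
      rw [map_sum]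
      refine Finset.sum_congr rfl fun z' _ => ?_
      rw [map_prod]
      exact Finset.prod_congr rfl fun j _ => hconj_xi _ _
    have hgg : ∀ u, g u * (starRingEnd ℂ) (g u)
        = ∑ z : ZMod ℓ, ∑ z' : ZMod ℓ,
            ∏ j : {j : Fin n // j ≠ v}, (xi (cJ j) (z - u j) * xi (-(cJ j)) (z' - u j)) := by
      intro u
      rw [hconjg u, hg]
      simp only
      rw [Finset.sum_mul_sum]
      exact Finset.sum_congr rfl fun z _ => Finset.sum_congr rfl fun z' _ =>
        (Finset.prod_mul_distrib).symm
    have hswap : ∑ u, g u * (starRingEnd ℂ) (g u)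
        = ∑ z : ZMod ℓ, ∑ z' : ZMod ℓ, ∏ j : {j : Fin n // j ≠ v}, H (cJ j) z z' := by
      rw [Finset.sum_congr rfl fun u _ => hgg u, Finset.sum_comm]
      refine Finset.sum_congr rfl fun z _ => ?_
      rw [Finset.sum_comm]
      refine Finset.sum_congr rfl fun z' _ => ?_
      have hfac := Finset.prod_univ_sum (fun _ : {j : Fin n // j ≠ v} => (univ : Finset (ZMod ℓ)))
        (fun j t => xi (cJ j) (z - t) * xi (-(cJ j)) (z' - t))
      rw [Fintype.piFinset_univ] at hfac
      rw [← hfac]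
      exact Finset.prod_congr rfl fun j _ => (hH _ _ _).symm
    have hnormsum : ∑ u, ‖g u‖^2 = ‖∑ u, g u * (starRingEnd ℂ) (g u)‖ := by
      have hc : ∀ u : ({j : Fin n // j ≠ v} → ZMod ℓ),
          g u * (starRingEnd ℂ) (g u) = ((‖g u‖^2 : ℝ) : ℂ) := by
        intro u
        rw [Complex.mul_conj, Complex.normSq_eq_norm_sq]
      rw [Finset.sum_congr rfl fun u _ => hc u, ← Complex.ofReal_sum, Complex.norm_real,
        Real.norm_eq_abs, abs_of_nonneg (Finset.sum_nonneg fun u _ => sq_nonneg _)]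
    rw [hnormsum, hswap]
    refine (norm_sum_le _ _).trans ?_
    have hper : ∀ z : ZMod ℓ, ‖∑ z' : ZMod ℓ, ∏ j : {j : Fin n // j ≠ v}, H (cJ j) z z'‖
        ≤ 2 * (ℓ:ℝ)^(n-1) := by
      intro z
      refine (norm_sum_le _ _).trans ?_
      have hterm : ∀ z' : ZMod ℓ, ‖∏ j : {j : Fin n // j ≠ v}, H (cJ j) z z'‖
          ≤ if z' = z then (ℓ:ℝ)^(n-1) else (ℓ:ℝ)^(n-2) := by
        intro z'
        rw [norm_prod]
        split_ifs with hzz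
        · calc ∏ j : {j : Fin n // j ≠ v}, ‖H (cJ j) z z'‖
              ≤ ∏ _j : {j : Fin n // j ≠ v}, (ℓ:ℝ) :=
              Finset.prod_le_prod (fun j _ => norm_nonneg _) (fun j _ => hH_norm _ _ _)
            _ = (ℓ:ℝ)^(n-1) := by rw [Finset.prod_const, Finset.card_univ, hcardS]
        · have hzz' : z ≠ z' := fun h => hzz h.symm
          calc ∏ j : {j : Fin n // j ≠ v}, ‖H (cJ j) z z'‖
              ≤ ∏ j : {j : Fin n // j ≠ v}, (if j = ws then 1 else (ℓ:ℝ)) := by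
                refine Finset.prod_le_prod (fun j _ => norm_nonneg _) (fun j _ => ?_)
                split_ifs with hjw
                · rw [hjw, hcJw, hH_off _ _ _ hJ hzz']
                  simp
                · exact hH_norm _ _ _
            _ = (ℓ:ℝ)^(n-2) := by
                rw [← Finset.mul_prod_erase univ _ (Finset.mem_univ ws), if_pos rfl, one_mul]
                have hcongr : ∀ j ∈ univ.erase ws, (if j = ws then (1:ℝ) else (ℓ:ℝ)) = (ℓ:ℝ) :=
                  fun j hj => if_neg (Finset.ne_of_mem_erase hj)
                rw [Finset.prod_congr rfl hcongr, Finset.prod_const,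
                  Finset.card_erase_of_mem (Finset.mem_univ ws), Finset.card_univ, hcardS]
                congr 1
      refine (Finset.sum_le_sum fun z' _ => hterm z').trans ?_
      have hle : ∀ z' : ZMod ℓ, (if z' = z then (ℓ:ℝ)^(n-1) else (ℓ:ℝ)^(n-2))
          ≤ (ℓ:ℝ)^(n-2) + (if z' = z then (ℓ:ℝ)^(n-1) else 0) := by
        intro z'
        split_ifs
        · nlinarith [pow_nonneg hl0 (n-2)]
        · simp
      refine (Finset.sum_le_sum fun z' _ => hle z').trans ?_
      rw [Finset.sum_add_distrib, Finset.sum_const, Finset.sum_ite_eq' univ z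
        (fun _ => (ℓ:ℝ)^(n-1)), if_pos (Finset.mem_univ z), Finset.card_univ, ZMod.card]
      have hpow : (ℓ:ℝ) * (ℓ:ℝ)^(n-2) = (ℓ:ℝ)^(n-1) := by
        rw [← pow_succ']
        congr 1
        omega
      rw [nsmul_eq_mul, hpow]
      linarith [pow_nonneg hl0 (n-1)]
    refine (Finset.sum_le_sum fun z _ => hper z).trans ?_
    rw [Finset.sum_const, Finset.card_univ, ZMod.card, nsmul_eq_mul]
    have hpow : (ℓ:ℝ) * (ℓ:ℝ)^(n-1) = (ℓ:ℝ)^n := by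
      rw [← pow_succ']
      congr 1
      omega
    rw [show (ℓ:ℝ) * (2 * (ℓ:ℝ)^(n-1)) = 2 * ((ℓ:ℝ) * (ℓ:ℝ)^(n-1)) from by ring, hpow]
  calc ‖∑ u, B u * g u‖ ^ 2 ≤ (∑ u, ‖g u‖) ^ 2 :=
        pow_le_pow_left₀ (norm_nonneg _) h5 2
    _ ≤ (ℓ:ℝ)^(n-1) * ∑ u, ‖g u‖^2 := h6
    _ ≤ (ℓ:ℝ)^(n-1) * (2 * (ℓ:ℝ)^n) :=
        mul_le_mul_of_nonneg_left h7 (pow_nonneg hl0 _)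
    _ = 2 * ((ℓ:ℝ)^(n-1) * (ℓ:ℝ)^n) := by ring
    _ = 2 * (ℓ:ℝ)^(2*n-1) := by
        rw [← pow_add]
        congr 2
        omega

end ABound


namespace DlogData
variable {p ℓ : ℕ} [Fact p.Prime] [Fact ℓ.Prime] {e : ZMod ℓ → ZMod p} {ψ : AddChar (ZMod p) ℂ}

lemma delta_expand (h : DlogData p ℓ e ψ) (c : ZMod p) (z : ZMod ℓ) :
    (if z ≠ 0 ∧ e z = c then (1:ℂ) else 0)
      = (p:ℂ)⁻¹ * ∑ j : ZMod p, ψ (-(j * c)) * xi e ψ j z := by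
  have hpne : (p:ℂ) ≠ 0 := Nat.cast_ne_zero.2 (Fact.out (p := p.Prime)).ne_zero
  rcases eq_or_ne z 0 with rfl | hz
  · simp [xi_zero]
  · have hj : ∀ j : ZMod p, ψ (-(j * c)) * xi e ψ j z = ψ (j * (e z - c)) := by
      intro j
      rw [xi_of_ne _ hz, ← AddChar.map_add_eq_mul]
      congr 1
      ring
    rw [Finset.sum_congr rfl fun j _ => hj j, h.sum_psi_mul (e z - c)]
    rcases eq_or_ne (e z) c with he | he
    · rw [if_pos (sub_eq_zero.2 he), if_pos ⟨hz, he⟩, inv_mul_cancel₀ hpne]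
    · rw [if_neg (fun hc => he (sub_eq_zero.1 hc)), if_neg (fun hc => he hc.2), mul_zero]

end DlogData

lemma sub_pow_le_descFactorial (N : ℕ) : ∀ m : ℕ, (N - m)^m ≤ N.descFactorial m := by
  intro m
  induction m with
  | zero => simp
  | succ k ih =>
    rw [Nat.descFactorial_succ, pow_succ, mul_comm]
    refine Nat.mul_le_mul (Nat.sub_le_sub_left (Nat.le_succ k) N) ?_
    exact le_trans (Nat.pow_le_pow_left (Nat.sub_le_sub_left (Nat.le_succ k) N) k) ih

open DlogData in
theorem exists_pattern (p : ℕ) (hp : p.Prime) (n : ℕ) :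
    ∃ C : ℕ, ∀ ℓ : ℕ, ℓ.Prime → C < ℓ → p ∣ ℓ - 1 →
      (∃ u : (ZMod ℓ)ˣ, (u : ZMod ℓ) ^ p = -1) →
      ∀ t : Fin n × Fin n → ZMod p,
      ∃ x : Fin n → ZMod ℓ, ∀ q : Fin n × Fin n, q.1 < q.2 →
        x q.1 - x q.2 ≠ 0 ∧
        ((∃ u : (ZMod ℓ)ˣ, x q.1 - x q.2 = (u : ZMod ℓ) ^ p) ↔ t q = 0) := by
  classical
  rcases Nat.eq_zero_or_pos n with rfl | hn1
  · exact ⟨1, fun ℓ _ _ _ _ t => ⟨fun i => i.elim0, fun q _ => q.1.elim0⟩⟩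
  haveI : Fact p.Prime := ⟨hp⟩
  set Pc : ℕ := (univ.filter (fun q : Fin n × Fin n => q.1 < q.2)).card with hPc
  refine ⟨2 * 4^n * p^(2*Pc) + 2*n + 2, fun ℓ hl hC hdvd hnegone t => ?_⟩
  haveI : Fact ℓ.Prime := ⟨hl⟩
  have hl2n : 2*n ≤ ℓ := by omega
  have hlpos : 0 < ℓ := hl.pos
  have hnl : n ≤ ℓ := by omega
  obtain ⟨e, hmul, hzero, hone⟩ := exists_dlog p ℓ hp hl hdvd
  have hp0 : p ≠ 0 := hp.ne_zero
  haveI : NeZero p := ⟨hp0⟩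
  have hprt := Complex.isPrimitiveRoot_exp p hp0
  have hζp : Complex.exp (2 * Real.pi * Complex.I / p) ^ p = 1 := hprt.pow_eq_one
  set ψ : AddChar (ZMod p) ℂ := AddChar.zmodChar p hζp with hψdef
  have hψprim : ψ.IsPrimitive := AddChar.zmodChar_primitive_of_primitive_root p hprt
  have hζnorm : ‖Complex.exp (2 * Real.pi * Complex.I / p)‖ = 1 := by
    have h2 : ‖Complex.exp (2 * Real.pi * Complex.I / p)‖ ^ p = 1 := by
      rw [← norm_pow, hζp, norm_one]
    rcases (pow_eq_one_iff_cases).1 h2 with h3 | h3 | h3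
    · exact absurd h3 hp0
    · exact h3
    · nlinarith [norm_nonneg (Complex.exp (2 * Real.pi * Complex.I / p))]
  have hψnorm : ∀ a : ZMod p, ‖ψ a‖ = 1 := by
    intro a
    rw [hψdef, AddChar.zmodChar_apply, norm_pow, hζnorm, one_pow]
  have hD : DlogData p ℓ e ψ := by
    refine ⟨hmul, hzero, hone, ?_, hψprim, hψnorm⟩
    obtain ⟨u, hu⟩ := hnegone
    refine (hzero (-1) ?_).2 ⟨u, hu.symm⟩
    simp only [ne_eq, neg_eq_zero]
    exact one_ne_zero
  -- notation
  have hpC : (p:ℂ) ≠ 0 := Nat.cast_ne_zero.2 hp0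
  have hpR : (0:ℝ) < (p:ℝ) := by exact_mod_cast hp.pos
  have hlR : (0:ℝ) < (ℓ:ℝ) := by exact_mod_cast hlpos
  set P : Finset (Fin n × Fin n) := univ.filter (fun q : Fin n × Fin n => q.1 < q.2) with hP
  set A : ((Fin n × Fin n) → ZMod p) → ℂ :=
    fun J => ∑ x : Fin n → ZMod ℓ, ∏ q ∈ P, xi e ψ (J q) (x q.1 - x q.2) with hA
  set T : (Fin n × Fin n) → Finset (ZMod p) := fun q => if q.1 < q.2 then univ else {0} with hT
  set coeff : ((Fin n × Fin n) → ZMod p) → ℂ :=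
    fun J => ∏ q ∈ P, ((p:ℂ)⁻¹ * ψ (-(J q * t q))) with hcoeff
  set Sg : Finset (Fin n → ZMod ℓ) :=
    univ.filter (fun x => ∀ q ∈ P, x q.1 - x q.2 ≠ 0 ∧ e (x q.1 - x q.2) = t q) with hSg
  -- Step A
  have stepA : (Sg.card : ℂ) = ∑ J ∈ Fintype.piFinset T, coeff J * A J := by
    have e1 : (Sg.card : ℂ) = ∑ x : Fin n → ZMod ℓ,
        ∏ q ∈ P, (if x q.1 - x q.2 ≠ 0 ∧ e (x q.1 - x q.2) = t q then (1:ℂ) else 0) := by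
      rw [hSg, ← Finset.sum_boole]
      refine Finset.sum_congr rfl fun x _ => ?_
      by_cases hx : ∀ q ∈ P, x q.1 - x q.2 ≠ 0 ∧ e (x q.1 - x q.2) = t q
      · rw [if_pos hx, Finset.prod_eq_one]
        intro q hq
        rw [if_pos (hx q hq)]
      · rw [if_neg hx]
        push_neg at hx
        obtain ⟨q, hq, hql⟩ := hx
        refine (Finset.prod_eq_zero hq ?_).symm
        rw [if_neg ?_]
        intro hcon
        exact hql hcon.1 hcon.2
    have e2 : ∀ (x : Fin n → ZMod ℓ) (q : Fin n × Fin n),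
        (if q.1 < q.2 then
          (if x q.1 - x q.2 ≠ 0 ∧ e (x q.1 - x q.2) = t q then (1:ℂ) else 0) else 1)
          = ∑ j ∈ T q,
            (if q.1 < q.2 then (p:ℂ)⁻¹ * ψ (-(j * t q)) * xi e ψ j (x q.1 - x q.2) else 1) := by
      intro x q
      by_cases hq : q.1 < q.2
      · rw [hT]
        simp only [if_pos hq]
        rw [delta_expand hD (t q) (x q.1 - x q.2), Finset.mul_sum]
        exact Finset.sum_congr rfl fun j _ => by ring
      · rw [hT]
        simp only [if_neg hq]
        rw [Finset.sum_singleton]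
    calc (Sg.card : ℂ)
        = ∑ x : Fin n → ZMod ℓ,
            ∏ q ∈ P, (if x q.1 - x q.2 ≠ 0 ∧ e (x q.1 - x q.2) = t q then (1:ℂ) else 0) := e1
      _ = ∑ x : Fin n → ZMod ℓ, ∏ q : Fin n × Fin n,
            (if q.1 < q.2 then
              (if x q.1 - x q.2 ≠ 0 ∧ e (x q.1 - x q.2) = t q then (1:ℂ) else 0) else 1) := by
            refine Finset.sum_congr rfl fun x _ => ?_
            rw [hP, Finset.prod_filter]
      _ = ∑ x : Fin n → ZMod ℓ, ∑ J ∈ Fintype.piFinset T, ∏ q : Fin n × Fin n,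
            (if q.1 < q.2 then (p:ℂ)⁻¹ * ψ (-(J q * t q)) * xi e ψ (J q) (x q.1 - x q.2)
             else 1) := by
            refine Finset.sum_congr rfl fun x _ => ?_
            rw [Finset.prod_congr rfl (fun q _ => e2 x q), Finset.prod_univ_sum]
      _ = ∑ J ∈ Fintype.piFinset T, ∑ x : Fin n → ZMod ℓ, ∏ q : Fin n × Fin n,
            (if q.1 < q.2 then (p:ℂ)⁻¹ * ψ (-(J q * t q)) * xi e ψ (J q) (x q.1 - x q.2)
             else 1) := Finset.sum_comm
      _ = ∑ J ∈ Fintype.piFinset T, coeff J * A J := by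
            refine Finset.sum_congr rfl fun J hJ => ?_
            rw [hA]
            simp only
            rw [Finset.mul_sum]
            refine Finset.sum_congr rfl fun x _ => ?_
            rw [← Finset.prod_filter
              (fun q : Fin n × Fin n => q.1 < q.2)
              (fun q => (p:ℂ)⁻¹ * ψ (-(J q * t q)) * xi e ψ (J q) (x q.1 - x q.2))]
            rw [hcoeff]
            simp only
            rw [← Finset.prod_mul_distrib]
  -- Step B : main term
  set J0 : (Fin n × Fin n) → ZMod p := fun _ => 0 with hJ0
  have hJ0mem : J0 ∈ Fintype.piFinset T := by
    rw [Fintype.mem_piFinset]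
    intro q
    rw [hT]
    by_cases hq : q.1 < q.2
    · simp [hq]
    · simp [hq, hJ0]
  have hcoeffJ0 : coeff J0 = (p:ℂ)⁻¹ ^ Pc := by
    rw [hcoeff]
    simp only [hJ0, zero_mul, neg_zero, AddChar.map_zero_eq_one, mul_one]
    rw [Finset.prod_const, hPc]
  set Icount : ℕ := (univ.filter (fun x : Fin n → ZMod ℓ => Function.Injective x)).card
    with hIcount
  have hAJ0 : A J0 = (Icount : ℂ) := by
    rw [hA, hIcount]
    simp only
    rw [← Finset.sum_boole]
    refine Finset.sum_congr rfl fun x _ => ?_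
    by_cases hx : Function.Injective x
    · rw [if_pos hx, Finset.prod_eq_one]
      intro q hq
      rw [hP, Finset.mem_filter] at hq
      have hne : x q.1 - x q.2 ≠ 0 :=
        sub_ne_zero.2 (fun hc => (ne_of_lt hq.2) (hx hc))
      rw [hJ0, xi_zero_char, if_neg hne]
    · rw [if_neg hx]
      obtain ⟨a, b, hab, hne⟩ := Function.not_injective_iff.1 hx
      rcases lt_or_gt_of_ne hne with hlt | hlt
      · refine Finset.prod_eq_zero (Finset.mem_filter.2 ⟨Finset.mem_univ ((a, b) : Fin n × Fin n), hlt⟩) ?_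
        rw [hJ0, xi_zero_char, if_pos (sub_eq_zero.2 hab)]
      · refine Finset.prod_eq_zero (Finset.mem_filter.2 ⟨Finset.mem_univ ((b, a) : Fin n × Fin n), hlt⟩) ?_
        rw [hJ0, xi_zero_char, if_pos (sub_eq_zero.2 hab.symm)]
  have hIdesc : (ℓ - n)^n ≤ Icount := by
    have h1 : Icount = Fintype.card {f : Fin n → ZMod ℓ // Function.Injective f} := by
      rw [hIcount, Fintype.card_subtype]
    have h2 : Fintype.card {f : Fin n → ZMod ℓ // Function.Injective f}
        = Fintype.card (Fin n ↪ ZMod ℓ) :=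
      Fintype.card_congr (Equiv.subtypeInjectiveEquivEmbedding (Fin n) (ZMod ℓ))
    rw [h1, h2, Fintype.card_embedding_eq, Fintype.card_fin, ZMod.card]
    exact sub_pow_le_descFactorial ℓ n
  -- Step C : error bound for nontrivial J
  have herr : ∀ J ∈ Fintype.piFinset T, J ≠ J0 →
      ‖coeff J * A J‖ ≤ (p:ℝ)⁻¹ ^ Pc * Real.sqrt (2 * (ℓ:ℝ)^(2*n-1)) := by
    intro J hJmem hJne
    have hcoeffnorm : ‖coeff J‖ = (p:ℝ)⁻¹ ^ Pc := by
      rw [hcoeff]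
      simp only
      rw [norm_prod]
      have : ∀ q ∈ P, ‖(p:ℂ)⁻¹ * ψ (-(J q * t q))‖ = (p:ℝ)⁻¹ := by
        intro q _
        rw [norm_mul, hψnorm, mul_one, norm_inv, Complex.norm_natCast]
      rw [Finset.prod_congr rfl this, Finset.prod_const, hPc]
    obtain ⟨q0, hq0⟩ := Function.ne_iff.1 hJne
    have hq0lt : q0.1 < q0.2 := by
      by_contra hcon
      have := Fintype.mem_piFinset.1 hJmem q0
      rw [hT] at this
      simp only [if_neg hcon, Finset.mem_singleton] at this
      exact hq0 this
    have hq0ne : J (q0.1, q0.2) ≠ 0 := by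
      rw [Prod.mk.eta]
      exact hq0
    have hbound := norm_A_sq_le (xi e ψ) (fun c z => xi_neg hD c z)
      (fun c z => norm_xi_le c z hD) (fun c z => conj_xi hD c z)
      (H e ψ) (fun c y y' => rfl) (fun c y y' => norm_H_le hD c y y')
      (fun c y y' hc hyy => H_off hD hc hyy) J hq0lt hq0ne
    have hAle : ‖A J‖ ≤ Real.sqrt (2 * (ℓ:ℝ)^(2*n-1)) := by
      rw [← Real.sqrt_sq (norm_nonneg (A J))]
      exact Real.sqrt_le_sqrt hbound
    rw [norm_mul, hcoeffnorm]
    exact mul_le_mul_of_nonneg_left hAle (by positivity)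
  -- Step D : number of terms
  have hcardT : (Fintype.piFinset T).card = p ^ Pc := by
    rw [Fintype.card_piFinset]
    have h1 : ∀ q : Fin n × Fin n, (T q).card = if q.1 < q.2 then p else 1 := by
      intro q
      rw [hT]
      by_cases hq : q.1 < q.2
      · simp [hq, Finset.card_univ, ZMod.card]
      · simp [hq]
    rw [Finset.prod_congr rfl (fun q _ => h1 q),
      ← Finset.prod_filter (fun q : Fin n × Fin n => q.1 < q.2) (fun _ => p),
      Finset.prod_const, ← hP, ← hPc]
  -- Step E : assembly
  have hsplit := Finset.add_sum_erase (Fintype.piFinset T) (fun J => coeff J * A J) hJ0mem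
  set M : ℝ := (p:ℝ)⁻¹ ^ Pc * Icount with hM
  have hmainC : coeff J0 * A J0 = ((M:ℝ):ℂ) := by
    rw [hcoeffJ0, hAJ0, hM]
    push_cast
    ring
  have herrsum : ‖∑ J ∈ (Fintype.piFinset T).erase J0, coeff J * A J‖
      ≤ Real.sqrt (2 * (ℓ:ℝ)^(2*n-1)) := by
    refine (norm_sum_le _ _).trans ?_
    have hb : ∀ J ∈ (Fintype.piFinset T).erase J0,
        ‖coeff J * A J‖ ≤ (p:ℝ)⁻¹ ^ Pc * Real.sqrt (2 * (ℓ:ℝ)^(2*n-1)) := fun J hJ =>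
      herr J (Finset.mem_of_mem_erase hJ) (Finset.ne_of_mem_erase hJ)
    refine (Finset.sum_le_sum hb).trans ?_
    rw [Finset.sum_const, nsmul_eq_mul]
    have hcard : (((Fintype.piFinset T).erase J0).card : ℝ) ≤ (p:ℝ) ^ Pc := by
      have h1 : ((Fintype.piFinset T).erase J0).card ≤ p ^ Pc :=
        hcardT ▸ Finset.card_erase_le (s := Fintype.piFinset T) (a := J0)
      exact_mod_cast h1
    calc (((Fintype.piFinset T).erase J0).card : ℝ)
          * ((p:ℝ)⁻¹ ^ Pc * Real.sqrt (2 * (ℓ:ℝ)^(2*n-1)))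
        ≤ (p:ℝ) ^ Pc * ((p:ℝ)⁻¹ ^ Pc * Real.sqrt (2 * (ℓ:ℝ)^(2*n-1))) :=
          mul_le_mul_of_nonneg_right hcard (by positivity)
      _ = Real.sqrt (2 * (ℓ:ℝ)^(2*n-1)) := by
          rw [← mul_assoc, ← mul_pow, mul_inv_cancel₀ (ne_of_gt hpR), one_pow, one_mul]
  have hlow : M - Real.sqrt (2 * (ℓ:ℝ)^(2*n-1)) ≤ (Sg.card : ℝ) := by
    have hC1 : (((Sg.card : ℝ) - M : ℝ) : ℂ)
        = ∑ J ∈ (Fintype.piFinset T).erase J0, coeff J * A J := by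
      rw [Complex.ofReal_sub]
      rw [show ((Sg.card:ℝ):ℂ) = (Sg.card:ℂ) from by push_cast; rfl]
      rw [stepA, ← hsplit, hmainC]
      ring
    have h2 : |(Sg.card : ℝ) - M| ≤ Real.sqrt (2 * (ℓ:ℝ)^(2*n-1)) := by
      calc |(Sg.card:ℝ) - M| = ‖(((Sg.card:ℝ) - M : ℝ):ℂ)‖ := by
            rw [Complex.norm_real, Real.norm_eq_abs]
        _ = ‖∑ J ∈ (Fintype.piFinset T).erase J0, coeff J * A J‖ := by rw [hC1]
        _ ≤ Real.sqrt (2 * (ℓ:ℝ)^(2*n-1)) := herrsum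
    linarith [(abs_le.1 h2).1]
  -- numeric positivity
  have hMge : (p:ℝ)⁻¹^Pc * ((ℓ:ℝ)/2)^n ≤ M := by
    rw [hM]
    refine mul_le_mul_of_nonneg_left ?_ (by positivity)
    have h1 : ((ℓ:ℝ)/2)^n ≤ (((ℓ - n : ℕ)):ℝ)^n := by
      refine pow_le_pow_left₀ (by positivity) ?_ n
      rw [Nat.cast_sub hnl]
      have h2 : (2*n : ℝ) ≤ (ℓ:ℝ) := by exact_mod_cast hl2n
      push_cast
      linarith
    refine h1.trans ?_
    exact_mod_cast Nat.cast_le.2 hIdesc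
  have hsq : Real.sqrt (2 * (ℓ:ℝ)^(2*n-1)) < (p:ℝ)⁻¹^Pc * ((ℓ:ℝ)/2)^n := by
    refine (Real.sqrt_lt' (by positivity)).2 ?_
    have hexp : ((p:ℝ)⁻¹^Pc * ((ℓ:ℝ)/2)^n)^2 = (ℓ:ℝ)^(2*n) / ((p:ℝ)^(2*Pc) * 4^n) := by
      rw [mul_pow, ← pow_mul, ← pow_mul, div_pow, inv_pow,
        show Pc*2 = 2*Pc from mul_comm _ _, show n*2 = 2*n from mul_comm _ _,
        show (2:ℝ)^(2*n) = 4^n from by rw [pow_mul]; norm_num]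
      field_simp
    rw [hexp]
    have hD4 : (0:ℝ) < (p:ℝ)^(2*Pc) * 4^n := by positivity
    rw [lt_div_iff₀ hD4]
    have hpow2n : (ℓ:ℝ)^(2*n) = (ℓ:ℝ) * (ℓ:ℝ)^(2*n-1) := by
      rw [← pow_succ']
      congr 1
      omega
    rw [hpow2n]
    have h2D : 2 * ((p:ℝ)^(2*Pc) * 4^n) < (ℓ:ℝ) := by
      have h1 : (2 * 4^n * p^(2*Pc) : ℕ) < ℓ := by omega
      have h2 : ((2 * 4^n * p^(2*Pc) : ℕ) : ℝ) < (ℓ:ℝ) := by exact_mod_cast h1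
      push_cast at h2
      linarith
    have hposL : (0:ℝ) < (ℓ:ℝ)^(2*n-1) := pow_pos hlR _
    nlinarith [hposL, h2D]
  have hcardpos : 0 < Sg.card := by
    have h1 : (0:ℝ) < (Sg.card : ℝ) := by linarith
    exact_mod_cast h1
  obtain ⟨x, hx⟩ := Finset.card_pos.1 hcardpos
  rw [hSg, Finset.mem_filter] at hx
  refine ⟨x, fun q hq => ?_⟩
  have hmemP : q ∈ P := by
    rw [hP]
    exact Finset.mem_filter.2 ⟨Finset.mem_univ _, hq⟩
  have hxq := hx.2 q hmemP
  refine ⟨hxq.1, ?_, ?_⟩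
  · rintro ⟨u, hu⟩
    rw [← hxq.2]
    exact (hzero _ hxq.1).2 ⟨u, hu⟩
  · intro ht
    exact (hzero _ hxq.1).1 (by rw [hxq.2, ht])


theorem stmt_5 (p : ℕ) (hp : p.Prime) (V : Type*) [Fintype V] (G : SimpleGraph V) :
    ∃ C : ℕ, ∀ ℓ : ℕ, ℓ.Prime → C < ℓ → p ∣ ℓ - 1 →
      (∃ u : (ZMod ℓ)ˣ, (u : ZMod ℓ) ^ p = -1) →
      Nonempty (G ↪g pUnitaryCayley (ZMod ℓ) p) := by
  classical
  haveI : Fact p.Prime := ⟨hp⟩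
  haveI : Fact (1 < p) := ⟨hp.one_lt⟩
  set n := Fintype.card V with hn
  obtain ⟨eV⟩ : Nonempty (V ≃ Fin n) := ⟨Fintype.equivFin V⟩
  obtain ⟨C, hc⟩ := exists_pattern p hp n
  refine ⟨C, fun ℓ hl hC hdvd hneg => ?_⟩
  haveI : Fact ℓ.Prime := ⟨hl⟩
  obtain ⟨u₀, hu₀⟩ := hneg
  set t : Fin n × Fin n → ZMod p :=
    fun q => if G.Adj (eV.symm q.1) (eV.symm q.2) then 0 else 1 with ht
  obtain ⟨x, hx⟩ := hc ℓ hl hC hdvd ⟨u₀, hu₀⟩ t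
  set f : V → ZMod ℓ := fun v => x (eV v) with hf
  have key : ∀ u v : V, u ≠ v → (f u - f v ≠ 0 ∧
      ((∃ w : (ZMod ℓ)ˣ, f u - f v = (w : ZMod ℓ)^p) ↔ G.Adj u v)) := by
    intro u v huv
    have hij : eV u ≠ eV v := fun h => huv (eV.injective h)
    rcases lt_or_gt_of_ne hij with hlt | hlt
    · have h := hx (eV u, eV v) hlt
      simp only [ht, Equiv.symm_apply_apply] at h
      refine ⟨h.1, h.2.trans ?_⟩
      by_cases hadj : G.Adj u v
      · simp [hadj]
      · simp [hadj]
    · have h := hx (eV v, eV u) hlt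
      simp only [ht, Equiv.symm_apply_apply] at h
      have hiff : (∃ w : (ZMod ℓ)ˣ, f v - f u = (w : ZMod ℓ)^p) ↔ G.Adj v u := by
        refine h.2.trans ?_
        by_cases hadj : G.Adj v u
        · simp [hadj]
        · simp [hadj]
      constructor
      · intro hcon
        exact h.1 (by rw [← neg_sub, hcon, neg_zero])
      · constructor
        · rintro ⟨w, hw⟩
          refine G.adj_symm (hiff.1 ⟨u₀ * w, ?_⟩)
          rw [Units.val_mul, mul_pow, hu₀]
          rw [show (f v - f u : ZMod ℓ) = -(f u - f v) from by ring, hw]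
          ring
        · intro hadj
          obtain ⟨w, hw⟩ := hiff.2 (G.adj_symm hadj)
          refine ⟨u₀ * w, ?_⟩
          rw [Units.val_mul, mul_pow, hu₀]
          rw [show (f u - f v : ZMod ℓ) = -(f v - f u) from by ring, hw]
          ring
  have hinj : Function.Injective f := by
    intro a b hab
    by_contra hne
    exact (key a b hne).1 (by rw [hab, sub_self])
  refine ⟨⟨⟨f, hinj⟩, ?_⟩⟩
  intro a b
  simp only [Function.Embedding.coeFn_mk]
  rw [pUnitaryCayley, SimpleGraph.fromRel_adj]
  by_cases hab : a = b
  · subst hab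
    simp
  · constructor
    · rintro ⟨hne, h | h⟩
      · exact (key a b hab).2.1 h
      · refine G.adj_symm ((key b a (Ne.symm hab)).2.1 h)
    · intro hadj
      exact ⟨fun hc => (key a b hab).1 (by rw [hc, sub_self]),
        Or.inl ((key a b hab).2.2 hadj)⟩
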